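/- If (M^n, g, f) is a nontrivial complete locally conformally flat gradient Yamabe soliton (W = 0) and f has no critical point, then the fibers of the warped product structure (ℝ, dr²) ×_{|∇f|} (N^{n−1}, ḡ) have constant sectional curvature. -/

import Mathlib

open scoped BigOperators

noncomputable section

/-- Kronecker delta. -/
def kd {m : ℕ} (a b : Fin m) : ℝ := if a = b then 1 else 0

/-- The metric of the warped product `(ℝ, dr²) ×_φ (N^n, ḡ)` at a point, in coordinates
`(r, θ)` where the `θ`'s are `ḡ`-orthonormal coordinates on the fiber `N` at the point:
`g = diag(1, φ², …, φ²)`.  Index `0` is the radial direction `∂_r`. -/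
def warpMetric {n : ℕ} (φ : ℝ) (i j : Fin (n + 1)) : ℝ :=
  if i = j then (if i = 0 then 1 else φ ^ 2) else 0

/-- Its inverse metric. -/
def warpMetricInv {n : ℕ} (φ : ℝ) (i j : Fin (n + 1)) : ℝ :=
  if i = j then (if i = 0 then 1 else 1 / φ ^ 2) else 0

/-- Pointwise model of: if a nontrivial complete locally conformally flat gradient
Yamabe soliton has a potential with no critical points, so that (by Cao–Sun–Zhang) it
is the warped product `(ℝ, dr²) ×_{|∇f|} (N^{n-1}, ḡ)`, then the fibers have constant
sectional curvature.  The total manifold has dimension `n + 1 ≥ 4`; `Rb` is the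
curvature tensor of the fiber at a point (in `ḡ`-orthonormal coordinates), `RM` the
curvature tensor of the warped metric `g = dr² + φ²ḡ` (with `φ = |∇f| > 0`), whose
components are prescribed by the standard warped product curvature formulas, and local
conformal flatness says the Weyl tensor of `g` vanishes.  Conclusion: the fiber
curvature has the constant sectional curvature form. -/
theorem lcf_warped_product_fiber_constant_curvature
    (n : ℕ) (hn : 3 ≤ n)
    (Rb : Fin n → Fin n → Fin n → Fin n → ℝ)
    (hbskew₁ : ∀ a b c d, Rb a b c d = - Rb b a c d)
    (hbskew₂ : ∀ a b c d, Rb a b c d = - Rb a b d c)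
    (hbpair : ∀ a b c d, Rb a b c d = Rb c d a b)
    (hbbianchi : ∀ a b c d, Rb a b c d + Rb b c a d + Rb c a b d = 0)
    (φ φ' φ'' : ℝ) (hφ : 0 < φ)
    (RM : Fin (n + 1) → Fin (n + 1) → Fin (n + 1) → Fin (n + 1) → ℝ)
    (hskew₁ : ∀ i j k l, RM i j k l = - RM j i k l)
    (hskew₂ : ∀ i j k l, RM i j k l = - RM i j l k)
    (hpair : ∀ i j k l, RM i j k l = RM k l i j)
    (hrad : ∀ a b : Fin n, RM 0 a.succ 0 b.succ = - φ'' * φ * kd a b)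
    (hfib : ∀ a b c d : Fin n, RM a.succ b.succ c.succ d.succ =
      φ ^ 2 * Rb a b c d - φ' ^ 2 * φ ^ 2 * (kd a c * kd b d - kd a d * kd b c))
    (hmix : ∀ a b c : Fin n, RM 0 a.succ b.succ c.succ = 0)
    -- local conformal flatness: the Weyl tensor of the warped metric vanishes
    (hlcf : let g := warpMetric (n := n) φ; let ginv := warpMetricInv (n := n) φ;
      let Ric := fun i k => ∑ j, ∑ l, ginv j l * RM i j k l;
      let S := ∑ i, ∑ k, ginv i k * Ric i k;
      ∀ i j k l : Fin (n + 1),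
        RM i j k l
          - (1 / (((n : ℝ) + 1) - 2)) *
              (Ric i k * g j l + Ric j l * g i k - Ric i l * g j k - Ric j k * g i l)
          + (S / ((((n : ℝ) + 1) - 1) * (((n : ℝ) + 1) - 2))) *
              (g j l * g i k - g i l * g j k) = 0) :
    ∃ κ : ℝ, ∀ a b c d : Fin n,
      Rb a b c d = κ * (kd a c * kd b d - kd a d * kd b c) := by
  have h0 : 0 < n := by omega
  have h1 : 1 < n := by omega
  set i0 : Fin n := ⟨0, h0⟩ with hi0
  set i1 : Fin n := ⟨1, h1⟩ with hi1
  have hφ2 : (φ : ℝ) ^ 2 ≠ 0 := pow_ne_zero 2 hφ.ne'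
  set RicM : Fin (n + 1) → Fin (n + 1) → ℝ :=
    fun i k => ∑ p, ∑ q, warpMetricInv (n := n) φ p q * RM i p k q with hRicM
  set SM : ℝ := ∑ p, ∑ q, warpMetricInv (n := n) φ p q * RicM p q with hSM
  have key : ∀ i j k l : Fin (n + 1),
      RM i j k l
        - (1 / (((n : ℝ) + 1) - 2)) *
            (RicM i k * warpMetric (n := n) φ j l + RicM j l * warpMetric (n := n) φ i k
              - RicM i l * warpMetric (n := n) φ j k - RicM j k * warpMetric (n := n) φ i l)
        + (SM / ((((n : ℝ) + 1) - 1) * (((n : ℝ) + 1) - 2))) *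
            (warpMetric (n := n) φ j l * warpMetric (n := n) φ i k
              - warpMetric (n := n) φ i l * warpMetric (n := n) φ j k) = 0 := hlcf
  -- metric values
  have hg00 : warpMetric (n := n) φ 0 0 = (1 : ℝ) := by simp [warpMetric]
  have hg0s : ∀ a : Fin n, warpMetric (n := n) φ 0 a.succ = 0 := by
    intro a; simp [warpMetric, (Fin.succ_ne_zero a).symm]
  have hgs0 : ∀ a : Fin n, warpMetric (n := n) φ a.succ 0 = 0 := by
    intro a; simp [warpMetric, Fin.succ_ne_zero a]
  have hgss : ∀ a c : Fin n, warpMetric (n := n) φ a.succ c.succ = φ ^ 2 * kd a c := by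
    intro a c
    by_cases h : a = c <;> simp [warpMetric, kd, Fin.succ_inj, h, Fin.succ_ne_zero]
  -- kronecker values
  have hkd00 : kd i0 i0 = 1 := by simp [kd]
  have hkd11 : kd i1 i1 = 1 := by simp [kd]
  have hkd01 : kd i0 i1 = 0 := by simp [kd, hi0, hi1, Fin.ext_iff]
  have hkd10 : kd i1 i0 = 0 := by simp [kd, hi0, hi1, Fin.ext_iff]
  -- collapse the Ricci double sums
  have collapse : ∀ i k : Fin (n + 1),
      RicM i k = RM i 0 k 0 + ∑ b : Fin n, (1 / φ ^ 2) * RM i b.succ k b.succ := by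
    intro i k
    rw [hRicM]
    have h1 : ∀ p : Fin (n + 1),
        (∑ q, warpMetricInv (n := n) φ p q * RM i p k q)
          = (if p = 0 then 1 else 1 / φ ^ 2) * RM i p k p := by
      intro p
      simp only [warpMetricInv, ite_mul, zero_mul]
      rw [Finset.sum_ite_eq]
      simp
    simp only [h1]
    rw [Fin.sum_univ_succ]
    simp [Fin.succ_ne_zero]
  have hRicss : ∀ a c : Fin n, RicM a.succ c.succ
      = (∑ x, Rb a x c x) - (φ'' * φ + ((n : ℝ) - 1) * φ' ^ 2) * kd a c := by
    intro a c
    rw [collapse]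
    have h2 : RM a.succ 0 c.succ 0 = -φ'' * φ * kd a c := by
      have e1 := hskew₁ 0 a.succ c.succ 0
      have e2 := hskew₂ 0 a.succ c.succ 0
      have e3 := hrad a c
      linarith
    have h3 : ∀ b : Fin n, (1 / φ ^ 2) * RM a.succ b.succ c.succ b.succ
        = Rb a b c b - φ' ^ 2 * (kd a c * kd b b - kd a b * kd b c) := by
      intro b
      rw [hfib]
      field_simp
    simp only [h3]
    have hkd1 : (∑ b : Fin n, kd b b) = (n : ℝ) := by simp [kd]
    have hkd2 : (∑ b : Fin n, kd a b * kd b c) = kd a c := by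
      simp only [kd, ite_mul, one_mul, zero_mul]
      rw [Finset.sum_ite_eq]
      simp
    rw [h2, Finset.sum_sub_distrib]
    rw [← Finset.mul_sum, Finset.sum_sub_distrib, ← Finset.mul_sum, hkd1, hkd2]
    ring
  refine ⟨Rb i0 i1 i0 i1, fun a b c d => ?_⟩
  have e1 := key a.succ b.succ c.succ d.succ
  simp only [hfib, hgss, hRicss] at e1
  have e2 := key i0.succ i1.succ i0.succ i1.succ
  simp only [hfib, hgss, hRicss, hkd00, hkd01, hkd10, hkd11] at e2
  have Eac := key 0 a.succ 0 c.succ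
  simp only [hrad, hgss, hg00, hg0s, hgs0, hRicss] at Eac
  have Ebd := key 0 b.succ 0 d.succ
  simp only [hrad, hgss, hg00, hg0s, hgs0, hRicss] at Ebd
  have Ead := key 0 a.succ 0 d.succ
  simp only [hrad, hgss, hg00, hg0s, hgs0, hRicss] at Ead
  have Ebc := key 0 b.succ 0 c.succ
  simp only [hrad, hgss, hg00, hg0s, hgs0, hRicss] at Ebc
  have E00 := key 0 i0.succ 0 i0.succ
  simp only [hrad, hgss, hg00, hg0s, hgs0, hRicss, hkd00] at E00
  have E11 := key 0 i1.succ 0 i1.succ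
  simp only [hrad, hgss, hg00, hg0s, hgs0, hRicss, hkd11] at E11
  have main : φ ^ 2 * Rb a b c d
      = φ ^ 2 * (Rb i0 i1 i0 i1 * (kd a c * kd b d - kd a d * kd b c)) := by
    linear_combination
      e1 - (kd a c * kd b d - kd a d * kd b c) * e2
        - φ ^ 2 * (kd b d * (Eac - kd a c * E00) + kd a c * (Ebd - kd b d * E00)
            - kd b c * (Ead - kd a d * E00) - kd a d * (Ebc - kd b c * E00)
            - (kd a c * kd b d - kd a d * kd b c) * (E11 - E00))
  exact mul_left_cancel₀ hφ2 main
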